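/- arXiv:2209.14530 — 2 statements merged into one kernel-verified Lean document; each statement's English description precedes it below -/
import Mathlib

section
/- For every n-qubit pure state ψ, the Fourier coefficients of the characteristic distribution satisfy p̂_ψ(v,w) = 2^{−n} p_ψ(w,v) for all v,w ∈ 𝔽₂ⁿ. -/
open scoped BigOperators
open Finset

noncomputable section

/-- Length-`n` bit strings, i.e. `𝔽₂ⁿ`. -/
abbrev BV (n : ℕ) := Fin n → ZMod 2

/-- Integer-valued inner product: number of coordinates where both strings are 1. -/
def bdot {n : ℕ} (p q : BV n) : ℕ :=
  (Finset.univ.filter (fun i => p i = 1 ∧ q i = 1)).card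

/-- The Weyl operator `W_x` for `x = (p, q) ∈ 𝔽₂^{2n}`:
`W_x |b⟩ = i^{p·q} (−1)^{q·b} |b ⊕ p⟩`. -/
def Weyl {n : ℕ} (x : BV n × BV n) : Matrix (BV n) (BV n) ℂ :=
  Matrix.of fun r c => if r = c + x.1 then Complex.I ^ bdot x.1 x.2 * (-1 : ℂ) ^ bdot x.2 c else 0

/-- `⟨ψ|W_x|ψ⟩`. -/
def weylExp {n : ℕ} (ψ : BV n → ℂ) (x : BV n × BV n) : ℂ :=
  ∑ r : BV n, (starRingEnd ℂ) (ψ r) * ((Weyl x).mulVec ψ r)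

/-- `ψ` is an `n`-qubit pure state, i.e. a unit vector in `ℂ^{2ⁿ}`. -/
def IsState {n : ℕ} (ψ : BV n → ℂ) : Prop :=
  ∑ b : BV n, ‖ψ b‖ ^ 2 = 1

/-- The characteristic distribution `p_ψ(x) = 2^{−n} |⟨ψ|W_x|ψ⟩|²`. -/
def charDist {n : ℕ} (ψ : BV n → ℂ) (x : BV n × BV n) : ℝ :=
  (2 ^ n : ℝ)⁻¹ * ‖weylExp ψ x‖ ^ 2

/-- The Weyl distribution `q_ψ(x) = Σ_y p_ψ(y) p_ψ(x ⊕ y)`. -/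
def weylDist {n : ℕ} (ψ : BV n → ℂ) (x : BV n × BV n) : ℝ :=
  ∑ y : BV n × BV n, charDist ψ y * charDist ψ (x + y)

/-- Fourier coefficient `f̂(s) = 4^{−n} Σ_x f(x) (−1)^{x·s}` for `f : 𝔽₂^{2n} → ℝ`. -/
def booleanFourier {n : ℕ} (f : BV n × BV n → ℝ) (s : BV n × BV n) : ℝ :=
  (4 ^ n : ℝ)⁻¹ * ∑ x : BV n × BV n, f x * (-1 : ℝ) ^ (bdot x.1 s.1 + bdot x.2 s.2)

/-- The Hadamard gate on qubit `j`. -/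
def Hgate {n : ℕ} (j : Fin n) : Matrix (BV n) (BV n) ℂ :=
  Matrix.of fun r c =>
    if ∀ i, i ≠ j → r i = c i then
      (((Real.sqrt 2 : ℝ) : ℂ))⁻¹ * (-1 : ℂ) ^ ((r j).val * (c j).val)
    else 0

/-- The phase gate `S = diag(1, i)` on qubit `j`. -/
def Sgate {n : ℕ} (j : Fin n) : Matrix (BV n) (BV n) ℂ :=
  Matrix.of fun r c => if r = c then Complex.I ^ (r j).val else 0

/-- The CNOT gate with control qubit `j` and target qubit `k`. -/
def CNOTgate {n : ℕ} (j k : Fin n) : Matrix (BV n) (BV n) ℂ :=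
  Matrix.of fun r c => if r = Function.update c k (c k + c j) then 1 else 0

/-- The generators of the `n`-qubit Clifford group. -/
def cliffordGens (n : ℕ) : Set (Matrix (BV n) (BV n) ℂ) :=
  {M | (∃ j, M = Hgate j) ∨ (∃ j, M = Sgate j) ∨ (∃ j k, j ≠ k ∧ M = CNOTgate j k)}

/-- The `n`-qubit Clifford group `𝒞ₙ`: all finite products of the generators.
(Each generator has finite order, so this coincides with the generated group.) -/
def CliffordGroup (n : ℕ) : Submonoid (Matrix (BV n) (BV n) ℂ) :=
  Submonoid.closure (cliffordGens n)

/-- The all-zeros basis state `|0ⁿ⟩`. -/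
def e0 {n : ℕ} : BV n → ℂ := fun b => if b = 0 then 1 else 0

/-- The set of `n`-qubit stabilizer states `𝒮ₙ = {C|0ⁿ⟩ : C ∈ 𝒞ₙ}`. -/
def stabStates (n : ℕ) : Set (BV n → ℂ) :=
  {φ | ∃ C ∈ CliffordGroup n, φ = C.mulVec e0}

/-- The inner product `⟨φ|ψ⟩`. -/
def innerC {n : ℕ} (φ ψ : BV n → ℂ) : ℂ := ∑ b : BV n, (starRingEnd ℂ) (φ b) * ψ b

/-- The stabilizer fidelity `F_𝒮(ψ) = max_{φ ∈ 𝒮ₙ} |⟨φ|ψ⟩|²`. -/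
def stabFidelity {n : ℕ} (ψ : BV n → ℂ) : ℝ :=
  sSup {r | ∃ φ ∈ stabStates n, r = ‖innerC φ ψ‖ ^ 2}

/-- The stabilizer extent `ξ(ψ)`: the minimum of `(Σᵢ |cᵢ|)²` over all finite
decompositions `ψ = Σᵢ cᵢ φᵢ` with stabilizer states `φᵢ`. -/
def stabExtent {n : ℕ} (ψ : BV n → ℂ) : ℝ :=
  sInf {r | ∃ (m : ℕ) (c : Fin m → ℂ) (φ : Fin m → (BV n → ℂ)),
    (∀ i, φ i ∈ stabStates n) ∧ ψ = ∑ i, c i • φ i ∧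
    r = (∑ i, ‖c i‖) ^ 2}

/-- The T-gate `T = diag(1, e^{iπ/4})` on qubit `j`. -/
def Tgate {n : ℕ} (j : Fin n) : Matrix (BV n) (BV n) ℂ :=
  Matrix.of fun r c => if r = c then Complex.exp (Complex.I * Real.pi / 4) ^ (r j).val else 0

/-- The `m`-fold tensor power `|T⟩^{⊗m}` of `|T⟩ = (|0⟩ + e^{iπ/4}|1⟩)/√2`. -/
def TstateM (m : ℕ) : BV m → ℂ :=
  fun b => ∏ i : Fin m, ((((Real.sqrt 2 : ℝ) : ℂ))⁻¹ * Complex.exp (Complex.I * Real.pi / 4) ^ (b i).val)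

end

section HelperLemmas
-- helpers
lemma bv_add_self {n : ℕ} (a : BV n) : a + a = 0 := by
  funext i; exact CharTwo.add_self_eq_zero _
lemma bv_cancel {n : ℕ} (a b : BV n) : a + (a + b) = b := by
  rw [← add_assoc, bv_add_self, zero_add]
lemma zmod2_cases (x : ZMod 2) : x = 0 ∨ x = 1 := by fin_cases x <;> [exact Or.inl rfl; exact Or.inr rfl]

lemma bdot_comm {n : ℕ} (p q : BV n) : bdot p q = bdot q p := by
  unfold bdot; congr 1; ext i; simp [and_comm]

lemma neg_pow_bdot_prod {n : ℕ} (q a : BV n) :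
    ((-1 : ℂ)) ^ bdot q a = ∏ i, if q i = 1 ∧ a i = 1 then (-1 : ℂ) else 1 := by
  rw [bdot, ← Finset.prod_const, Finset.prod_filter]

lemma neg_pow_bdot_mul {n : ℕ} (q a b : BV n) :
    ((-1 : ℂ)) ^ bdot q a * (-1 : ℂ) ^ bdot q b = (-1 : ℂ) ^ bdot q (a + b) := by
  rw [neg_pow_bdot_prod, neg_pow_bdot_prod, neg_pow_bdot_prod, ← Finset.prod_mul_distrib]
  refine Finset.prod_congr rfl fun i _ => ?_
  have ha := zmod2_cases (a i); have hb := zmod2_cases (b i)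
  have : (a + b) i = a i + b i := rfl
  rcases zmod2_cases (q i) with hq | hq <;>
    rcases ha with ha | ha <;> rcases hb with hb | hb <;>
      simp [this, ha, hb, hq]

lemma sum_sign {n : ℕ} (t : BV n) :
    ∑ q : BV n, ((-1 : ℂ)) ^ bdot q t = if t = 0 then (2 : ℂ) ^ n else 0 := by
  have h1 : ∑ q : BV n, ((-1 : ℂ)) ^ bdot q t
      = ∑ q : BV n, ∏ i, if q i = 1 ∧ t i = 1 then (-1 : ℂ) else 1 := by
    refine Finset.sum_congr rfl fun q _ => neg_pow_bdot_prod q t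
  rw [h1]
  have h2 : ∑ q : BV n, ∏ i, (if q i = 1 ∧ t i = 1 then (-1 : ℂ) else 1)
      = ∏ i : Fin n, ∑ x : ZMod 2, (if x = 1 ∧ t i = 1 then (-1 : ℂ) else 1) := by
    rw [Finset.prod_univ_sum]
    rw [← Fintype.piFinset_univ]
  rw [h2]
  by_cases ht : t = 0
  · subst ht
    rw [if_pos rfl]
    have hone : ∀ i : Fin n, (∑ x : ZMod 2, if x = 1 ∧ (0 : BV n) i = 1 then (-1:ℂ) else 1) = 2 := by
      intro i
      rw [show (∑ x : ZMod 2, if x = 1 ∧ (0 : BV n) i = 1 then (-1:ℂ) else 1)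
          = (if (0:ZMod 2) = 1 ∧ (0 : BV n) i = 1 then (-1:ℂ) else 1)
            + (if (1:ZMod 2) = 1 ∧ (0 : BV n) i = 1 then (-1:ℂ) else 1) from Fin.sum_univ_two _]
      norm_num
    rw [Finset.prod_congr rfl fun i _ => hone i, Finset.prod_const]
    simp
  · obtain ⟨i, hi⟩ : ∃ i, t i ≠ 0 := by
      by_contra h; push_neg at h; exact ht (funext fun i => h i)
    have hti : t i = 1 := (zmod2_cases (t i)).resolve_left hi
    rw [if_neg ht]
    refine Finset.prod_eq_zero (Finset.mem_univ i) ?_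
    rw [show (∑ x : ZMod 2, if x = 1 ∧ t i = 1 then (-1 : ℂ) else 1)
        = (if (0:ZMod 2) = 1 ∧ t i = 1 then (-1:ℂ) else 1) + (if (1:ZMod 2) = 1 ∧ t i = 1 then (-1:ℂ) else 1) from Fin.sum_univ_two _]
    simp [hti]

lemma weyl_mulVec {n : ℕ} (x : BV n × BV n) (ψ : BV n → ℂ) (r : BV n) :
    (Weyl x).mulVec ψ r
      = Complex.I ^ bdot x.1 x.2 * ((-1 : ℂ) ^ bdot x.2 (r + x.1) * ψ (r + x.1)) := by
  unfold Weyl Matrix.mulVec dotProduct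
  rw [Finset.sum_eq_single (r + x.1)]
  · dsimp only [Matrix.of_apply]
    rw [if_pos (by rw [add_assoc, bv_add_self, add_zero])]
    ring
  · intro c _ hc
    dsimp only [Matrix.of_apply]
    rw [if_neg, zero_mul]
    intro h
    exact hc (by rw [h, add_assoc, bv_add_self, add_zero])
  · intro h; exact absurd (Finset.mem_univ _) h

lemma weylExp_sq {n : ℕ} (ψ : BV n → ℂ) (p q : BV n) :
    weylExp ψ (p, q) * (starRingEnd ℂ) (weylExp ψ (p, q))
      = ∑ r : BV n, ∑ s : BV n,
          ((starRingEnd ℂ) (ψ r) * ψ (r + p) * ψ s * (starRingEnd ℂ) (ψ (s + p)))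
            * (-1 : ℂ) ^ bdot q (r + s) := by
  have hE : weylExp ψ (p, q) = Complex.I ^ bdot p q
      * ∑ r : BV n, (starRingEnd ℂ) (ψ r) * ((-1 : ℂ) ^ bdot q (r + p) * ψ (r + p)) := by
    unfold weylExp
    rw [Finset.mul_sum]
    refine Finset.sum_congr rfl fun r _ => ?_
    rw [weyl_mulVec]
    ring
  set S : ℂ := ∑ r : BV n, (starRingEnd ℂ) (ψ r) * ((-1 : ℂ) ^ bdot q (r + p) * ψ (r + p)) with hS
  have hconj : (starRingEnd ℂ) (weylExp ψ (p, q))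
      = (starRingEnd ℂ) (Complex.I ^ bdot p q) * (starRingEnd ℂ) S := by
    rw [hE, map_mul]
  have hI : Complex.I ^ bdot p q * (starRingEnd ℂ) (Complex.I ^ bdot p q) = 1 := by
    rw [map_pow, ← mul_pow, Complex.mul_conj]
    simp
  calc weylExp ψ (p, q) * (starRingEnd ℂ) (weylExp ψ (p, q))
      = (Complex.I ^ bdot p q * (starRingEnd ℂ) (Complex.I ^ bdot p q)) * (S * (starRingEnd ℂ) S) := by
        rw [hE, map_mul]; ring
    _ = S * (starRingEnd ℂ) S := by rw [hI, one_mul]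
    _ = ∑ r : BV n, ∑ s : BV n,
          ((starRingEnd ℂ) (ψ r) * ((-1 : ℂ) ^ bdot q (r + p) * ψ (r + p)))
            * ((starRingEnd ℂ) ((starRingEnd ℂ) (ψ s) * ((-1 : ℂ) ^ bdot q (s + p) * ψ (s + p)))) := by
        rw [hS, map_sum, Finset.sum_mul_sum]
    _ = _ := by
        refine Finset.sum_congr rfl fun r _ => Finset.sum_congr rfl fun s _ => ?_
        simp only [map_mul, map_pow, Complex.conj_conj, map_neg, map_one]
        have hsign : ((-1 : ℂ)) ^ bdot q (r + p) * (-1 : ℂ) ^ bdot q (s + p)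
            = (-1 : ℂ) ^ bdot q (r + s) := by
          rw [neg_pow_bdot_mul]
          congr 2
          rw [add_add_add_comm, bv_add_self, add_zero]
        calc (starRingEnd ℂ) (ψ r) * ((-1:ℂ) ^ bdot q (r + p) * ψ (r + p))
              * (ψ s * ((-1:ℂ) ^ bdot q (s + p) * (starRingEnd ℂ) (ψ (s + p))))
            = ((starRingEnd ℂ) (ψ r) * ψ (r + p) * ψ s * (starRingEnd ℂ) (ψ (s + p)))
              * ((-1:ℂ) ^ bdot q (r + p) * (-1:ℂ) ^ bdot q (s + p)) := by ring
          _ = _ := by rw [hsign]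

lemma key_sum {n : ℕ} (ψ : BV n → ℂ) (v w : BV n) :
    ∑ x : BV n × BV n,
        (weylExp ψ x * (starRingEnd ℂ) (weylExp ψ x)) * (-1 : ℂ) ^ (bdot x.1 v + bdot x.2 w)
      = 2 ^ n * (weylExp ψ (w, v) * (starRingEnd ℂ) (weylExp ψ (w, v))) := by
  have eqcond : ∀ r s : BV n, (r + s + w = 0) ↔ (s = r + w) := by
    intro r s
    constructor
    · intro h
      calc s = s + 0 := (add_zero s).symm
        _ = s + (r + s + w) := by rw [h]
        _ = (s + s) + (r + w) := by ring
        _ = r + w := by rw [bv_add_self, zero_add]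
    · rintro rfl
      calc r + (r + w) + w = (r + r) + (w + w) := by ring
        _ = 0 := by rw [bv_add_self, bv_add_self, add_zero]
  calc ∑ x : BV n × BV n,
        (weylExp ψ x * (starRingEnd ℂ) (weylExp ψ x)) * (-1 : ℂ) ^ (bdot x.1 v + bdot x.2 w)
      = ∑ p : BV n, ∑ q : BV n, ∑ r : BV n, ∑ s : BV n,
          (((starRingEnd ℂ) (ψ r) * ψ (r + p) * ψ s * (starRingEnd ℂ) (ψ (s + p)))
            * (-1 : ℂ) ^ bdot q (r + s))
          * ((-1 : ℂ) ^ bdot p v * (-1 : ℂ) ^ bdot q w) := by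
        rw [Fintype.sum_prod_type]
        refine Finset.sum_congr rfl fun p _ => Finset.sum_congr rfl fun q _ => ?_
        rw [weylExp_sq, pow_add, Finset.sum_mul]
        refine Finset.sum_congr rfl fun r _ => ?_
        rw [Finset.sum_mul]
    _ = ∑ p : BV n, ∑ r : BV n, ∑ s : BV n, ∑ q : BV n,
          (((starRingEnd ℂ) (ψ r) * ψ (r + p) * ψ s * (starRingEnd ℂ) (ψ (s + p)))
            * (-1 : ℂ) ^ bdot q (r + s))
          * ((-1 : ℂ) ^ bdot p v * (-1 : ℂ) ^ bdot q w) := by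
        refine Finset.sum_congr rfl fun p _ => ?_
        rw [Finset.sum_comm]
        exact Finset.sum_congr rfl fun r _ => Finset.sum_comm
    _ = ∑ p : BV n, ∑ r : BV n, ∑ s : BV n,
          ((starRingEnd ℂ) (ψ r) * ψ (r + p) * ψ s * (starRingEnd ℂ) (ψ (s + p))
            * (-1 : ℂ) ^ bdot p v)
          * (if r + s + w = 0 then (2 : ℂ) ^ n else 0) := by
        refine Finset.sum_congr rfl fun p _ => Finset.sum_congr rfl fun r _ =>
          Finset.sum_congr rfl fun s _ => ?_
        rw [← sum_sign (r + s + w), Finset.mul_sum]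
        refine Finset.sum_congr rfl fun q _ => ?_
        rw [← neg_pow_bdot_mul q (r + s) w]
        ring
    _ = ∑ p : BV n, ∑ r : BV n,
          ((starRingEnd ℂ) (ψ r) * ψ (r + p) * ψ (r + w) * (starRingEnd ℂ) (ψ (r + w + p))
            * (-1 : ℂ) ^ bdot p v) * (2 : ℂ) ^ n := by
        refine Finset.sum_congr rfl fun p _ => Finset.sum_congr rfl fun r _ => ?_
        simp only [eqcond, mul_ite, mul_zero]
        rw [Finset.sum_ite_eq' Finset.univ (r + w)]
        simp
    _ = ∑ r : BV n, ∑ s : BV n,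
          ((starRingEnd ℂ) (ψ r) * ψ (s) * ψ (r + w) * (starRingEnd ℂ) (ψ (s + w))
            * (-1 : ℂ) ^ bdot (r + s) v) * (2 : ℂ) ^ n := by
        rw [Finset.sum_comm]
        refine Finset.sum_congr rfl fun r _ => ?_
        rw [← Equiv.sum_comp (Equiv.addLeft r)]
        refine Finset.sum_congr rfl fun s _ => ?_
        have h1 : r + (Equiv.addLeft r s) = s := by
          simp [Equiv.addLeft]
          calc r + (r + s) = (r + r) + s := by ring
            _ = s := by rw [bv_add_self, zero_add]
        have h2 : r + w + (Equiv.addLeft r s) = s + w := by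
          simp [Equiv.addLeft]
          calc r + w + (r + s) = (r + r) + (s + w) := by ring
            _ = s + w := by rw [bv_add_self, zero_add]
        have h3 : (Equiv.addLeft r) s = r + s := by simp [Equiv.addLeft]
        rw [h1, h2, h3]
    _ = 2 ^ n * (weylExp ψ (w, v) * (starRingEnd ℂ) (weylExp ψ (w, v))) := by
        rw [weylExp_sq, Finset.mul_sum]
        refine Finset.sum_congr rfl fun r _ => ?_
        rw [Finset.mul_sum]
        refine Finset.sum_congr rfl fun s _ => ?_
        rw [bdot_comm (r + s) v]
        ring

end HelperLemmas

/-- p̂_ψ(v,w) = 2^{−n} p_ψ(w,v). -/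
theorem fourier_of_charDist {n : ℕ} (hn : 1 ≤ n) (ψ : BV n → ℂ) (hψ : IsState ψ)
    (v w : BV n) :
    booleanFourier (charDist ψ) (v, w) = (2 ^ n : ℝ)⁻¹ * charDist ψ (w, v) := by
  have hsum : (∑ x : BV n × BV n,
        ‖weylExp ψ x‖ ^ 2 * (-1 : ℝ) ^ (bdot x.1 v + bdot x.2 w))
      = 2 ^ n * ‖weylExp ψ (w, v)‖ ^ 2 := by
    apply Complex.ofReal_injective
    push_cast
    have habs : ∀ z : ℂ, ((‖z‖ : ℂ)) ^ 2 = z * (starRingEnd ℂ) z := by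
      intro z
      rw [Complex.mul_conj, ← Complex.sq_norm]
      push_cast
      ring
    simp only [habs]
    exact key_sum ψ v w
  unfold booleanFourier charDist
  simp only [mul_assoc]
  rw [← Finset.mul_sum, hsum]
  have h4 : (4 : ℝ) ^ n = 2 ^ n * 2 ^ n := by rw [← mul_pow]; norm_num
  have h2 : (2 : ℝ) ^ n ≠ 0 := by positivity
  field_simp [h4]
  rw [h4]; ring
end

section
/- Let ψ be an n-qubit pure state and ε ≥ 0 such that |⟨ψ|W_x|ψ⟩| ≤ ε for every x ∈ 𝔽₂^{2n} with x ≠ 0. Then η(ψ) := 2ⁿ Σ_{x∈𝔽₂^{2n}} q_ψ(x) p_ψ(x) ≤ (1 + (4ⁿ − 1)ε⁶)/2ⁿ. -/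
open scoped BigOperators
open Finset

lemma bdot_eq_sum {n : ℕ} (p q : BV n) : bdot p q = ∑ i, (p i).val * (q i).val := by
  unfold bdot
  rw [Finset.card_filter]
  refine Finset.sum_congr rfl fun i _ => ?_
  have hp : p i = 0 ∨ p i = 1 := by
    have : ∀ a : ZMod 2, a = 0 ∨ a = 1 := by decide
    exact this (p i)
  have hq : q i = 0 ∨ q i = 1 := by
    have : ∀ a : ZMod 2, a = 0 ∨ a = 1 := by decide
    exact this (q i)
  rcases hp with h | h <;> rcases hq with h' | h' <;> simp [h, h', show ZMod.val (1:ZMod 2) = 1 from rfl]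

lemma neg_one_pow_bdot {n : ℕ} (p q : BV n) :
    (-1 : ℂ) ^ bdot p q = ∏ i, (-1 : ℂ) ^ ((p i).val * (q i).val) := by
  rw [bdot_eq_sum, Finset.prod_pow_eq_pow_sum]

lemma neg_one_pow_bdot_add_right {n : ℕ} (v b c : BV n) :
    (-1 : ℂ) ^ bdot v (b + c) = (-1 : ℂ) ^ bdot v b * (-1 : ℂ) ^ bdot v c := by
  rw [neg_one_pow_bdot, neg_one_pow_bdot, neg_one_pow_bdot, ← Finset.prod_mul_distrib]
  refine Finset.prod_congr rfl fun i _ => ?_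
  have : ∀ a x y : ZMod 2, (-1 : ℂ) ^ (a.val * (x+y).val) =
      (-1 : ℂ) ^ (a.val * x.val) * (-1 : ℂ) ^ (a.val * y.val) := by
    have h : ∀ a : ZMod 2, a = 0 ∨ a = 1 := by decide
    intro a x y
    rcases h a with ha | ha <;> rcases h x with hx | hx <;> rcases h y with hy | hy <;>
      simp [ha, hx, hy, show ((1:ZMod 2)+1) = 0 from by decide, show ZMod.val (0:ZMod 2) = 0 from rfl, show ZMod.val (1:ZMod 2) = 1 from rfl]
  have hadd : (b + c) i = b i + c i := rfl
  rw [hadd]; exact this (v i) (b i) (c i)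

lemma sum_zmod2 (f : ZMod 2 → ℂ) : ∑ a : ZMod 2, f a = f 0 + f 1 := by
  have h : (Finset.univ : Finset (ZMod 2)) = {0, 1} := by decide
  rw [h, Finset.sum_pair (by decide : (0 : ZMod 2) ≠ 1)]

lemma sum_sgn {n : ℕ} (w : BV n) :
    ∑ q : BV n, (-1 : ℂ) ^ bdot q w = if w = 0 then (2 : ℂ) ^ n else 0 := by
  have : ∑ q : BV n, (-1 : ℂ) ^ bdot q w
      = ∑ q : BV n, ∏ i, (-1 : ℂ) ^ ((q i).val * (w i).val) := by
    exact Finset.sum_congr rfl fun q _ => neg_one_pow_bdot q w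
  rw [this]
  have hpi := Finset.sum_prod_piFinset (Finset.univ : Finset (ZMod 2))
    (fun (i : Fin n) (a : ZMod 2) => (-1 : ℂ) ^ (a.val * (w i).val))
  rw [Fintype.piFinset_univ] at hpi
  rw [hpi]
  split_ifs with hw
  · subst hw
    have : ∀ i : Fin n, ∑ a : ZMod 2, (-1 : ℂ) ^ (a.val * ((0 : BV n) i).val) = 2 := by
      intro i
      rw [sum_zmod2]
      norm_num [show ((0:BV n) i) = 0 from rfl, show ZMod.val (0:ZMod 2) = 0 from rfl]
    rw [Finset.prod_congr rfl fun i _ => this i, Finset.prod_const, Finset.card_univ,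
      Fintype.card_fin]
  · obtain ⟨i, hi⟩ : ∃ i, w i ≠ 0 := by
      by_contra h
      push_neg at h
      exact hw (funext h)
    have hwi : w i = 1 := by
      have : ∀ a : ZMod 2, a ≠ 0 → a = 1 := by decide
      exact this _ hi
    apply Finset.prod_eq_zero (Finset.mem_univ i)
    rw [sum_zmod2]
    norm_num [hwi, show ZMod.val (0:ZMod 2) = 0 from rfl, show ZMod.val (1:ZMod 2) = 1 from rfl]

lemma weylExp_eq {n : ℕ} (ψ : BV n → ℂ) (x : BV n × BV n) :
    weylExp ψ x = Complex.I ^ bdot x.1 x.2 *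
      ∑ b : BV n, (-1 : ℂ) ^ bdot x.2 (b + x.1) * ((starRingEnd ℂ) (ψ b) * ψ (b + x.1)) := by
  unfold weylExp Weyl Matrix.mulVec dotProduct
  rw [Finset.mul_sum]
  refine Finset.sum_congr rfl fun r _ => ?_
  have hinner : ∑ c : BV n, (Matrix.of fun r c =>
        if r = c + x.1 then Complex.I ^ bdot x.1 x.2 * (-1 : ℂ) ^ bdot x.2 c else 0) r c * ψ c
      = Complex.I ^ bdot x.1 x.2 * (-1 : ℂ) ^ bdot x.2 (r + x.1) * ψ (r + x.1) := by
    rw [Finset.sum_eq_single (r + x.1)]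
    · simp only [Matrix.of_apply]
      rw [if_pos]
      rw [add_assoc, bv_add_self, add_zero]
    · intro c _ hc
      simp only [Matrix.of_apply]
      rw [if_neg, zero_mul]
      intro h
      apply hc
      rw [h, add_assoc, bv_add_self, add_zero]
    · intro h
      exact absurd (Finset.mem_univ _) h
  rw [hinner]
  ring

lemma weylExp_mul_conj {n : ℕ} (ψ : BV n → ℂ) (x : BV n × BV n) :
    weylExp ψ x * (starRingEnd ℂ) (weylExp ψ x) =
      ∑ b : BV n, ∑ c : BV n, (-1 : ℂ) ^ bdot x.2 (b + x.1) * (-1 : ℂ) ^ bdot x.2 (c + x.1) *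
        (((starRingEnd ℂ) (ψ b) * ψ (b + x.1)) * (ψ c * (starRingEnd ℂ) (ψ (c + x.1)))) := by
  rw [weylExp_eq, map_mul]
  have hI : Complex.I ^ bdot x.1 x.2 * (starRingEnd ℂ) (Complex.I ^ bdot x.1 x.2) = 1 := by
    rw [map_pow, Complex.conj_I, ← mul_pow]
    simp
  calc Complex.I ^ bdot x.1 x.2 *
        (∑ b : BV n, (-1 : ℂ) ^ bdot x.2 (b + x.1) * ((starRingEnd ℂ) (ψ b) * ψ (b + x.1))) *
        ((starRingEnd ℂ) (Complex.I ^ bdot x.1 x.2) *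
        (starRingEnd ℂ) (∑ b : BV n, (-1 : ℂ) ^ bdot x.2 (b + x.1) *
          ((starRingEnd ℂ) (ψ b) * ψ (b + x.1))))
      = (Complex.I ^ bdot x.1 x.2 * (starRingEnd ℂ) (Complex.I ^ bdot x.1 x.2)) *
        ((∑ b : BV n, (-1 : ℂ) ^ bdot x.2 (b + x.1) * ((starRingEnd ℂ) (ψ b) * ψ (b + x.1))) *
         (starRingEnd ℂ) (∑ b : BV n, (-1 : ℂ) ^ bdot x.2 (b + x.1) *
          ((starRingEnd ℂ) (ψ b) * ψ (b + x.1)))) := by ring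
    _ = (∑ b : BV n, (-1 : ℂ) ^ bdot x.2 (b + x.1) * ((starRingEnd ℂ) (ψ b) * ψ (b + x.1))) *
        (∑ c : BV n, (-1 : ℂ) ^ bdot x.2 (c + x.1) * (ψ c * (starRingEnd ℂ) (ψ (c + x.1)))) := by
        rw [hI, one_mul, map_sum]
        congr 1
        refine Finset.sum_congr rfl fun c _ => ?_
        rw [map_mul, map_mul]
        simp [Complex.conj_conj]
    _ = _ := by
        rw [Finset.sum_mul_sum]
        refine Finset.sum_congr rfl fun b _ => Finset.sum_congr rfl fun c _ => by ring

lemma bv_neg {n : ℕ} (a : BV n) : -a = a := neg_eq_of_add_eq_zero_left (bv_add_self a)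

lemma sgn_mul {n : ℕ} (v a b : BV n) :
    (-1 : ℂ) ^ bdot v a * (-1 : ℂ) ^ bdot v b = (-1 : ℂ) ^ bdot v (a + b) :=
  (neg_one_pow_bdot_add_right v a b).symm

lemma key {n : ℕ} (ψ : BV n → ℂ) (s : BV n × BV n) :
    ∑ x : BV n × BV n, (weylExp ψ x * (starRingEnd ℂ) (weylExp ψ x)) *
        (-1 : ℂ) ^ (bdot x.2 s.1 + bdot x.1 s.2)
    = 2 ^ n * (weylExp ψ s * (starRingEnd ℂ) (weylExp ψ s)) := by
  calc ∑ x : BV n × BV n, (weylExp ψ x * (starRingEnd ℂ) (weylExp ψ x)) *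
        (-1 : ℂ) ^ (bdot x.2 s.1 + bdot x.1 s.2)
      = ∑ p : BV n, ∑ q : BV n,
          (∑ b : BV n, ∑ c : BV n, (-1 : ℂ) ^ bdot q (b + p) * (-1 : ℂ) ^ bdot q (c + p) *
            (((starRingEnd ℂ) (ψ b) * ψ (b + p)) * (ψ c * (starRingEnd ℂ) (ψ (c + p))))) *
          (-1 : ℂ) ^ (bdot q s.1 + bdot p s.2) := by
        rw [Fintype.sum_prod_type]
        refine Finset.sum_congr rfl fun p _ => Finset.sum_congr rfl fun q _ => ?_
        rw [weylExp_mul_conj]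
    _ = ∑ p : BV n, ∑ b : BV n, ∑ c : BV n,
          (((starRingEnd ℂ) (ψ b) * ψ (b + p)) * (ψ c * (starRingEnd ℂ) (ψ (c + p)))) *
          ((-1 : ℂ) ^ bdot p s.2 * ∑ q : BV n, (-1 : ℂ) ^ bdot q (b + (c + s.1))) := by
        refine Finset.sum_congr rfl fun p _ => ?_
        simp only [Finset.sum_mul]
        rw [Finset.sum_comm]
        refine Finset.sum_congr rfl fun b _ => ?_
        rw [Finset.sum_comm]
        refine Finset.sum_congr rfl fun c _ => ?_
        rw [Finset.mul_sum, Finset.mul_sum]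
        refine Finset.sum_congr rfl fun q _ => ?_
        have h1 : (-1 : ℂ) ^ bdot q (b + p) * ((-1 : ℂ) ^ bdot q (c + p) *
            (-1 : ℂ) ^ bdot q s.1) = (-1 : ℂ) ^ bdot q (b + (c + s.1)) := by
          rw [sgn_mul, sgn_mul]
          have hv : (b + p) + ((c + p) + s.1) = (b + (c + s.1)) + (p + p) := by abel
          rw [hv, bv_add_self, add_zero]
        rw [pow_add, ← h1]
        ring
    _ = ∑ p : BV n, ∑ b : BV n,
          (((starRingEnd ℂ) (ψ b) * ψ (b + p)) *
            (ψ (b + s.1) * (starRingEnd ℂ) (ψ ((b + s.1) + p)))) *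
          ((-1 : ℂ) ^ bdot p s.2 * 2 ^ n) := by
        refine Finset.sum_congr rfl fun p _ => Finset.sum_congr rfl fun b _ => ?_
        have hq : ∀ c : BV n, (∑ q : BV n, (-1 : ℂ) ^ bdot q (b + (c + s.1)))
            = if b + (c + s.1) = 0 then (2 : ℂ) ^ n else 0 := fun c => sum_sgn _
        rw [Finset.sum_congr rfl fun c _ => by rw [hq c]]
        rw [Finset.sum_eq_single (b + s.1)]
        · have h0 : b + ((b + s.1) + s.1) = (b + b) + (s.1 + s.1) := by abel
          rw [h0, bv_add_self, bv_add_self, add_zero, if_pos rfl]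
        · intro c _ hc
          rw [if_neg, mul_zero, mul_zero]
          intro h
          apply hc
          have h2 : c + s.1 = b := by rw [eq_neg_of_add_eq_zero_right h, bv_neg]
          have h3 : (c + s.1) + s.1 = b + s.1 := by rw [h2]
          rwa [add_assoc, bv_add_self, add_zero] at h3
        · intro h; exact absurd (Finset.mem_univ _) h
    _ = 2 ^ n * ∑ b : BV n, ∑ p : BV n, (-1 : ℂ) ^ bdot p s.2 *
          (((starRingEnd ℂ) (ψ b) * ψ (b + p)) *
            (ψ (b + s.1) * (starRingEnd ℂ) (ψ ((b + s.1) + p)))) := by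
        rw [Finset.sum_comm, Finset.mul_sum]
        refine Finset.sum_congr rfl fun b _ => ?_
        rw [Finset.mul_sum]
        exact Finset.sum_congr rfl fun p _ => by ring
    _ = 2 ^ n * (weylExp ψ s * (starRingEnd ℂ) (weylExp ψ s)) := by
        rw [weylExp_mul_conj]
        congr 1
        refine Finset.sum_congr rfl fun b _ => ?_
        refine (Fintype.sum_equiv (Equiv.addLeft b)
          (fun p => (-1 : ℂ) ^ bdot p s.2 *
            (((starRingEnd ℂ) (ψ b) * ψ (b + p)) *
              (ψ (b + s.1) * (starRingEnd ℂ) (ψ ((b + s.1) + p)))))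
          (fun c => (-1 : ℂ) ^ bdot s.2 (b + s.1) * (-1 : ℂ) ^ bdot s.2 (c + s.1) *
            (((starRingEnd ℂ) (ψ b) * ψ (b + s.1)) * (ψ c * (starRingEnd ℂ) (ψ (c + s.1)))))
          fun p => ?_)
        simp only [Equiv.coe_addLeft]
        have hv : (b + p) + s.1 = (b + s.1) + p := add_right_comm b p s.1
        rw [hv]
        have hs : (-1 : ℂ) ^ bdot s.2 (b + s.1) * (-1 : ℂ) ^ bdot s.2 ((b + s.1) + p)
            = (-1 : ℂ) ^ bdot p s.2 := by
          rw [sgn_mul]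
          have hv2 : (b + s.1) + ((b + s.1) + p) = p + ((b + s.1) + (b + s.1)) := by abel
          rw [hv2, bv_add_self, add_zero, bdot_comm]
        rw [hs]
        ring

lemma bdot_zero_left {n : ℕ} (q : BV n) : bdot (0 : BV n) q = 0 := by
  unfold bdot
  rw [Finset.card_eq_zero]
  ext i
  simp

lemma weylExp_zero {n : ℕ} (ψ : BV n → ℂ) (hψ : IsState ψ) : weylExp ψ 0 = 1 := by
  rw [weylExp_eq]
  have h1 : (0 : BV n × BV n).1 = 0 := rfl
  have h2 : (0 : BV n × BV n).2 = 0 := rfl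
  rw [h1, h2, bdot_zero_left]
  have : ∀ b : BV n, (-1 : ℂ) ^ bdot (0 : BV n) (b + 0) * ((starRingEnd ℂ) (ψ b) * ψ (b + 0))
      = ((‖ψ b‖ ^ 2 : ℝ) : ℂ) := by
    intro b
    rw [bdot_zero_left, add_zero, pow_zero, one_mul, mul_comm, Complex.mul_conj,
      Complex.sq_norm]
  rw [Finset.sum_congr rfl fun b _ => this b, pow_zero, one_mul, ← Complex.ofReal_sum]
  rw [hψ]
  norm_num

lemma sgn2_add {n : ℕ} (z x y : BV n × BV n) :
    (-1 : ℂ) ^ (bdot z.2 (x + y).1 + bdot z.1 (x + y).2)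
      = (-1 : ℂ) ^ (bdot x.2 z.1 + bdot x.1 z.2) * (-1 : ℂ) ^ (bdot y.2 z.1 + bdot y.1 z.2) := by
  have h1 : (x + y).1 = x.1 + y.1 := rfl
  have h2 : (x + y).2 = x.2 + y.2 := rfl
  rw [h1, h2, pow_add, pow_add, pow_add, ← sgn_mul z.2 x.1 y.1, ← sgn_mul z.1 x.2 y.2]
  rw [bdot_comm z.2 x.1, bdot_comm z.2 y.1, bdot_comm z.1 x.2, bdot_comm z.1 y.2]
  rw [bdot_comm x.2 z.1, bdot_comm y.2 z.1, bdot_comm x.1 z.2, bdot_comm y.1 z.2]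
  ring

lemma cubic_sum {n : ℕ} (ψ : BV n → ℂ) :
    ∑ x : BV n × BV n, ∑ y : BV n × BV n,
      (weylExp ψ x * (starRingEnd ℂ) (weylExp ψ x)) *
      (weylExp ψ y * (starRingEnd ℂ) (weylExp ψ y)) *
      (weylExp ψ (x + y) * (starRingEnd ℂ) (weylExp ψ (x + y)))
    = 2 ^ n * ∑ z : BV n × BV n, (weylExp ψ z * (starRingEnd ℂ) (weylExp ψ z)) ^ 3 := by
  set N : BV n × BV n → ℂ := fun x => weylExp ψ x * (starRingEnd ℂ) (weylExp ψ x) with hNdef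
  have h2n : (2 : ℂ) ^ n ≠ 0 := pow_ne_zero _ two_ne_zero
  have hN : ∀ w : BV n × BV n,
      N w = (2 ^ n : ℂ)⁻¹ * ∑ z : BV n × BV n, N z * (-1 : ℂ) ^ (bdot z.2 w.1 + bdot z.1 w.2) := by
    intro w
    rw [key ψ w, inv_mul_cancel_left₀ h2n]
  calc ∑ x : BV n × BV n, ∑ y : BV n × BV n, N x * N y * N (x + y)
      = ∑ x : BV n × BV n, ∑ y : BV n × BV n, (2 ^ n : ℂ)⁻¹ *
          ∑ z : BV n × BV n, (N z * (N x * (-1 : ℂ) ^ (bdot x.2 z.1 + bdot x.1 z.2))) *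
            (N y * (-1 : ℂ) ^ (bdot y.2 z.1 + bdot y.1 z.2)) := by
        refine Finset.sum_congr rfl fun x _ => Finset.sum_congr rfl fun y _ => ?_
        rw [hN (x + y)]
        simp only [Finset.mul_sum]
        refine Finset.sum_congr rfl fun z _ => ?_
        rw [sgn2_add z x y]
        ring
    _ = (2 ^ n : ℂ)⁻¹ * ∑ z : BV n × BV n, N z *
          ((∑ x : BV n × BV n, N x * (-1 : ℂ) ^ (bdot x.2 z.1 + bdot x.1 z.2)) *
           (∑ y : BV n × BV n, N y * (-1 : ℂ) ^ (bdot y.2 z.1 + bdot y.1 z.2))) := by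
        have hpull : ∀ x : BV n × BV n, (∑ y : BV n × BV n, (2 ^ n : ℂ)⁻¹ *
            ∑ z : BV n × BV n, (N z * (N x * (-1 : ℂ) ^ (bdot x.2 z.1 + bdot x.1 z.2))) *
              (N y * (-1 : ℂ) ^ (bdot y.2 z.1 + bdot y.1 z.2)))
            = (2 ^ n : ℂ)⁻¹ * ∑ y : BV n × BV n,
            ∑ z : BV n × BV n, (N z * (N x * (-1 : ℂ) ^ (bdot x.2 z.1 + bdot x.1 z.2))) *
              (N y * (-1 : ℂ) ^ (bdot y.2 z.1 + bdot y.1 z.2)) := fun x =>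
          (Finset.mul_sum _ _ _).symm
        rw [Finset.sum_congr rfl fun x _ => hpull x, ← Finset.mul_sum]
        congr 1
        rw [Finset.sum_congr rfl fun x (_ : x ∈ Finset.univ) => Finset.sum_comm, Finset.sum_comm]
        refine Finset.sum_congr rfl fun z _ => Eq.symm ?_
        rw [Finset.sum_mul_sum, Finset.mul_sum]
        refine Finset.sum_congr rfl fun x _ => ?_
        rw [Finset.mul_sum]
        exact Finset.sum_congr rfl fun y _ => by ring
    _ = (2 ^ n : ℂ)⁻¹ * ∑ z : BV n × BV n, N z * ((2 ^ n * N z) * (2 ^ n * N z)) := by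
        refine congrArg _ (Finset.sum_congr rfl fun z _ => ?_)
        rw [key ψ z]
    _ = 2 ^ n * ∑ z : BV n × BV n, N z ^ 3 := by
        have : ∀ z : BV n × BV n, N z * ((2 ^ n * N z) * (2 ^ n * N z))
            = (2 ^ n * 2 ^ n) * N z ^ 3 := fun z => by ring
        rw [Finset.sum_congr rfl fun z _ => this z, ← Finset.mul_sum]
        field_simp

lemma N_eq_t {n : ℕ} (ψ : BV n → ℂ) (x : BV n × BV n) :
    weylExp ψ x * (starRingEnd ℂ) (weylExp ψ x)
      = ((‖weylExp ψ x‖ ^ 2 : ℝ) : ℂ) := by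
  rw [Complex.mul_conj, Complex.sq_norm]

lemma cubic_sum_real {n : ℕ} (ψ : BV n → ℂ) :
    ∑ x : BV n × BV n, ∑ y : BV n × BV n,
      ‖weylExp ψ x‖ ^ 2 * ‖weylExp ψ y‖ ^ 2 *
        ‖weylExp ψ (x + y)‖ ^ 2
    = 2 ^ n * ∑ z : BV n × BV n, (‖weylExp ψ z‖ ^ 2) ^ 3 := by
  apply Complex.ofReal_injective
  push_cast
  have h := cubic_sum ψ
  simp only [N_eq_t] at h
  push_cast at h
  exact h

/-- if |⟨ψ|W_x|ψ⟩| ≤ ε for every x ≠ 0, then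
η(ψ) = 2ⁿ Σ_x q_ψ(x) p_ψ(x) ≤ (1 + (4ⁿ − 1)ε⁶)/2ⁿ. -/
theorem eta_upper_bound_of_small_weyl {n : ℕ} (hn : 1 ≤ n) (ψ : BV n → ℂ)
    (hψ : IsState ψ) (ε : ℝ) (hε : 0 ≤ ε)
    (hsmall : ∀ x : BV n × BV n, x ≠ 0 → ‖weylExp ψ x‖ ≤ ε) :
    (2 ^ n : ℝ) * ∑ x : BV n × BV n, weylDist ψ x * charDist ψ x ≤
      (1 + ((4 : ℝ) ^ n - 1) * ε ^ 6) / 2 ^ n := by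
  have h2 : (0 : ℝ) < (2 : ℝ) ^ n := by positivity
  have hA : ∀ x : BV n × BV n, weylDist ψ x * charDist ψ x
      = ((2 ^ n : ℝ)⁻¹) ^ 3 * ∑ y : BV n × BV n,
        ‖weylExp ψ x‖ ^ 2 * ‖weylExp ψ y‖ ^ 2 *
          ‖weylExp ψ (x + y)‖ ^ 2 := by
    intro x
    unfold weylDist charDist
    rw [Finset.sum_mul, Finset.mul_sum]
    exact Finset.sum_congr rfl fun y _ => by ring
  have hLHS : (2 ^ n : ℝ) * ∑ x : BV n × BV n, weylDist ψ x * charDist ψ x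
      = (2 ^ n : ℝ)⁻¹ * ∑ z : BV n × BV n, (‖weylExp ψ z‖ ^ 2) ^ 3 := by
    rw [Finset.sum_congr rfl fun x _ => hA x, ← Finset.mul_sum, cubic_sum_real ψ]
    field_simp
  rw [hLHS]
  have hsplit : ∑ z : BV n × BV n, (‖weylExp ψ z‖ ^ 2) ^ 3
      = (‖weylExp ψ 0‖ ^ 2) ^ 3 +
        ∑ z ∈ Finset.univ.erase 0, (‖weylExp ψ z‖ ^ 2) ^ 3 :=
    (Finset.add_sum_erase _ _ (Finset.mem_univ 0)).symm
  have h0 : (‖weylExp ψ 0‖ ^ 2) ^ 3 = 1 := by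
    rw [weylExp_zero ψ hψ, norm_one, one_pow, one_pow]
  have hcard : ((Finset.univ.erase (0 : BV n × BV n)).card : ℝ) = 4 ^ n - 1 := by
    rw [Finset.card_erase_of_mem (Finset.mem_univ _), Finset.card_univ]
    have hc : Fintype.card (BV n × BV n) = 2 ^ n * 2 ^ n := by
      simp [Fintype.card_prod, Fintype.card_fun, ZMod.card]
    rw [hc]
    have h1le : 1 ≤ 2 ^ n * 2 ^ n := Nat.one_le_iff_ne_zero.mpr (by positivity)
    push_cast [Nat.cast_sub h1le]
    rw [show ((2 : ℝ) ^ n * 2 ^ n) = 4 ^ n by rw [← mul_pow]; norm_num]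
  have hbound : ∑ z ∈ Finset.univ.erase 0, (‖weylExp ψ z‖ ^ 2) ^ 3
      ≤ ((4 : ℝ) ^ n - 1) * ε ^ 6 := by
    calc ∑ z ∈ Finset.univ.erase 0, (‖weylExp ψ z‖ ^ 2) ^ 3
        ≤ ∑ _z ∈ Finset.univ.erase (0 : BV n × BV n), ε ^ 6 := by
          refine Finset.sum_le_sum fun z hz => ?_
          have hz0 : z ≠ 0 := Finset.ne_of_mem_erase hz
          calc (‖weylExp ψ z‖ ^ 2) ^ 3 = ‖weylExp ψ z‖ ^ 6 := by
                rw [← pow_mul]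
            _ ≤ ε ^ 6 := pow_le_pow_left₀ (norm_nonneg _) (hsmall z hz0) 6
      _ = ((4 : ℝ) ^ n - 1) * ε ^ 6 := by
          rw [Finset.sum_const, nsmul_eq_mul, hcard]
  calc (2 ^ n : ℝ)⁻¹ * ∑ z : BV n × BV n, (‖weylExp ψ z‖ ^ 2) ^ 3
      ≤ (2 ^ n : ℝ)⁻¹ * (1 + ((4 : ℝ) ^ n - 1) * ε ^ 6) := by
        refine mul_le_mul_of_nonneg_left ?_ (by positivity)
        rw [hsplit, h0]
        exact add_le_add_right hbound 1
    _ = (1 + ((4 : ℝ) ^ n - 1) * ε ^ 6) / 2 ^ n := by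
        rw [div_eq_mul_inv, mul_comm]
end
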